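/- Let F : F_2^n → F_2^n be a quadratic APN function, and for each nonzero b define V_b = T_b ∪ T̄_b as above. Then the collection {V_b : b ≠ 0, V_b ≠ {0}} forms a vector space partition of F_2^n: every nonzero vector of F_2^n lies in exactly one of the subspaces V_b, and V_{b1} ∩ V_{b2} = {0} for distinct nonzero b1, b2. -/
import Mathlib


open Finset

/-- `Vec n` is the vector space `F_2^n`. -/
abbrev Vec (n : ℕ) := Fin n → ZMod 2

/-- The standard dot product on `F_2^n`. -/
def dotp {n : ℕ} (a b : Vec n) : ZMod 2 := ∑ i, a i * b i

/-- The difference (derivative) function `D_{F,a}(x) = F(x) + F(x+a)`. -/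
def Dder {n : ℕ} (F : Vec n → Vec n) (a x : Vec n) : Vec n := F x + F (x + a)

/-- The linear hyperplane `H_b = {x : ⟨b,x⟩ = 0}`. -/
def Hyp {n : ℕ} (b : Vec n) : Set (Vec n) := {x | dotp b x = 0}

/-- The affine hyperplane `H̄_b = {x : ⟨b,x⟩ = 1}`. -/
def HypBar {n : ℕ} (b : Vec n) : Set (Vec n) := {x | dotp b x = 1}

/-- `T_b = {a : image(D_{F,a}) = H_b} ∪ {0}`. -/
def Tset {n : ℕ} (F : Vec n → Vec n) (b : Vec n) : Set (Vec n) :=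
  {a | Set.range (Dder F a) = Hyp b} ∪ {0}

/-- `T̄_b = {a : image(D_{F,a}) = H̄_b}`. -/
def TsetBar {n : ℕ} (F : Vec n → Vec n) (b : Vec n) : Set (Vec n) :=
  {a | Set.range (Dder F a) = HypBar b}

/-- `V_b = T_b ∪ T̄_b`. -/
def Vset {n : ℕ} (F : Vec n → Vec n) (b : Vec n) : Set (Vec n) := Tset F b ∪ TsetBar F b

/-- `F` is quadratic: all second derivatives are constant (algebraic degree ≤ 2). -/
def IsQuadratic {n m : ℕ} (F : Vec n → Vec m) : Prop :=
  ∀ a₁ a₂ : Vec n, ∃ c : Vec m, ∀ x, F (x + a₁ + a₂) + F (x + a₁) + F (x + a₂) + F x = c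

/-- `F` is APN: every equation `F(x) + F(x+a) = b`, `a ≠ 0`, has at most 2 solutions. -/
def IsAPN {n : ℕ} (F : Vec n → Vec n) : Prop :=
  ∀ a : Vec n, a ≠ 0 → ∀ b : Vec n, Nat.card {x : Vec n // F x + F (x + a) = b} ≤ 2

/-- The Walsh transform `W_F(b,a) = Σ_x (-1)^{⟨b,F(x)⟩ + ⟨a,x⟩}`. -/
def Walsh {n m : ℕ} (F : Vec n → Vec m) (b : Vec m) (a : Vec n) : ℤ :=
  ∑ x : Vec n, (-1 : ℤ) ^ ((dotp b (F x) + dotp a x).val)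

/-- The component `F_b` is bent: `|W_F(b,a)| = 2^{n/2}` for all `a`. -/
def IsBent {n m : ℕ} (F : Vec n → Vec m) (b : Vec m) : Prop :=
  ∀ a : Vec n, (Walsh F b a) ^ 2 = 2 ^ n

/-- The set `N_F` of non-trivial non-bent components of `F`. -/
def NF {n m : ℕ} (F : Vec n → Vec m) : Set (Vec m) := {b | b ≠ 0 ∧ ¬ IsBent F b}

/-- A vector space partition of `F_q^n`: a collection of nonzero subspaces such that
every nonzero vector lies in exactly one member. -/
def IsVSP {K : Type} [Field K] {n : ℕ} (𝒱 : Finset (Submodule K (Fin n → K))) : Prop :=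
  (∀ S ∈ 𝒱, S ≠ ⊥) ∧
  ∀ x : Fin n → K, x ≠ 0 → ∃! S : Submodule K (Fin n → K), S ∈ 𝒱 ∧ x ∈ S

/-- A blocking set of `PG(m,2)` (identified with `F_2^{m+1} \ {0}`) with respect to
`k`-spaces (nonzero parts of `(k+1)`-dimensional subspaces). -/
def PGBlocking (m k : ℕ) (B : Set (Fin (m + 1) → ZMod 2)) : Prop :=
  0 ∉ B ∧ ∀ S : Submodule (ZMod 2) (Fin (m + 1) → ZMod 2),
    Module.finrank (ZMod 2) S = k + 1 → ∃ x ∈ B, x ∈ S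

/-- `F_b` has amplitude `2^{(n+k)/2}`. -/
def HasAmp {n m : ℕ} (F : Vec n → Vec m) (b : Vec m) (k : ℕ) : Prop :=
  (∀ a, (Walsh F b a) ^ 2 = 0 ∨ (Walsh F b a) ^ 2 = 2 ^ (n + k)) ∧
  ∃ a, (Walsh F b a) ^ 2 = 2 ^ (n + k)

-- helpers
lemma hz01 : ∀ z : ZMod 2, z = 0 ∨ z = 1 := by decide

lemma v2 {n : ℕ} (v : Vec n) : v + v = 0 :=
  funext fun i => CharTwo.add_self_eq_zero _

lemma vneg {n : ℕ} (v : Vec n) : -v = v := funext fun i => CharTwo.neg_eq (v i)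

lemma veq {n : ℕ} {u v : Vec n} (h : u + v = 0) : u = v := by
  have h2 := neg_eq_of_add_eq_zero_left h
  rw [← h2, vneg]

lemma dotp_single {n : ℕ} (b : Vec n) (i : Fin n) : dotp b (Pi.single i 1) = b i := by
  unfold dotp
  rw [Finset.sum_eq_single i]
  · simp
  · intro j _ hj
    rw [Pi.single_eq_of_ne hj, mul_zero]
  · intro h; exact absurd (Finset.mem_univ i) h

lemma dotp_zero_right {n : ℕ} (b : Vec n) : dotp b 0 = 0 := by simp [dotp]

lemma hyp_inj {n : ℕ} {b b' : Vec n} (h : Hyp b = Hyp b') : b = b' := by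
  funext i
  have h1 := Set.ext_iff.mp h (Pi.single i 1)
  simp only [Hyp, Set.mem_setOf_eq, dotp_single] at h1
  rcases hz01 (b i) with e|e <;> rcases hz01 (b' i) with e'|e' <;>
    rw [e, e'] at h1 ⊢ <;> simp_all

lemma hypbar_inj {n : ℕ} {b b' : Vec n} (h : HypBar b = HypBar b') : b = b' := by
  funext i
  have h1 := Set.ext_iff.mp h (Pi.single i 1)
  simp only [HypBar, Set.mem_setOf_eq, dotp_single] at h1
  rcases hz01 (b i) with e|e <;> rcases hz01 (b' i) with e'|e' <;>
    rw [e, e'] at h1 ⊢ <;> simp_all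

lemma hyp_ne_bar {n : ℕ} (b b' : Vec n) : Hyp b ≠ HypBar b' := by
  intro h
  have h0 : (0 : Vec n) ∈ Hyp b := by simp [Hyp, dotp_zero_right]
  rw [h] at h0
  simp [HypBar, dotp_zero_right] at h0

lemma key {n : ℕ} {F : Vec n → Vec n} (hq : IsQuadratic F) (ha : IsAPN F)
    {a : Vec n} (h0 : a ≠ 0) :
    ∃ b : Vec n, b ≠ 0 ∧
      (Set.range (Dder F a) = Hyp b ∨ Set.range (Dder F a) = HypBar b) := by
  classical
  set Lf : Vec n → Vec n := fun x => F x + F (x + a) + F 0 + F a with hLf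
  have hadd : ∀ x y : Vec n, Lf (x + y) = Lf x + Lf y := by
    intro x y
    obtain ⟨c, hc⟩ := hq a y
    have h1 := hc x
    have h2 := hc 0
    simp only [zero_add] at h2
    rw [add_comm a y] at h2
    have h3 : (F (x+a+y) + F (x+a) + F (x+y) + F x) + (F (y+a) + F a + F y + F 0) = 0 := by
      rw [h1, h2]; exact v2 c
    apply veq
    show (F (x+y) + F (x+y+a) + F 0 + F a) + ((F x + F (x+a) + F 0 + F a) + (F y + F (y+a) + F 0 + F a)) = 0
    rw [add_right_comm x y a]
    calc (F (x+y) + F (x+a+y) + F 0 + F a) + ((F x + F (x+a) + F 0 + F a) + (F y + F (y+a) + F 0 + F a))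
        = ((F (x+a+y) + F (x+a) + F (x+y) + F x) + (F (y+a) + F a + F y + F 0))
            + ((F 0 + F a) + (F 0 + F a)) := by abel
      _ = 0 := by rw [h3, v2, add_zero]
  have hLf0 : Lf 0 = 0 := by
    show F 0 + F (0 + a) + F 0 + F a = 0
    rw [zero_add]
    calc F 0 + F a + F 0 + F a = (F 0 + F 0) + (F a + F a) := by abel
      _ = 0 := by rw [v2, v2, add_zero]
  let L : Vec n →ₗ[ZMod 2] Vec n :=
    { toFun := Lf
      map_add' := hadd
      map_smul' := by
        intro c x
        rcases hz01 c with rfl | rfl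
        · simp [hLf0]
        · simp }
  have hDL : ∀ x, Dder F a x = Lf x + (F 0 + F a) := by
    intro x
    have h5 : Lf x + (F 0 + F a) = (F x + F (x + a)) + ((F 0 + F a) + (F 0 + F a)) := by
      show (F x + F (x + a) + F 0 + F a) + (F 0 + F a) = _
      abel
    rw [h5, v2, add_zero]; rfl
  have hka : Lf a = 0 := by
    show F a + F (a + a) + F 0 + F a = 0
    rw [v2 a]
    calc F a + F 0 + F 0 + F a = (F a + F a) + (F 0 + F 0) := by abel
      _ = 0 := by rw [v2, v2, add_zero]
  have hker2 : ∀ x, Lf x = 0 → x = 0 ∨ x = a := by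
    intro x hx
    by_contra hcon
    push_neg at hcon
    obtain ⟨hx0, hxa⟩ := hcon
    have hsol : ∀ z, Lf z = 0 → F z + F (z + a) = F 0 + F a := by
      intro z hz
      have h6 := hDL z
      rw [hz, zero_add] at h6
      exact h6
    have hsub : ({0, a, x} : Finset (Vec n)) ⊆
        Finset.univ.filter (fun z => F z + F (z + a) = F 0 + F a) := by
      intro z hz
      simp only [Finset.mem_insert, Finset.mem_singleton] at hz
      simp only [Finset.mem_filter, Finset.mem_univ, true_and]
      rcases hz with h | h | h <;> rw [h]
      · exact hsol 0 hLf0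
      · exact hsol a hka
      · exact hsol _ hx
    have h3card : ({0, a, x} : Finset (Vec n)).card = 3 := by
      rw [Finset.card_insert_of_notMem, Finset.card_insert_of_notMem,
        Finset.card_singleton]
      · exact Finset.notMem_singleton.mpr (Ne.symm hxa)
      · simp only [Finset.mem_insert, Finset.mem_singleton, not_or]
        exact ⟨Ne.symm h0, Ne.symm hx0⟩
    have hle := Finset.card_le_card hsub
    rw [h3card] at hle
    have hcard := ha a h0 (F 0 + F a)
    rw [Nat.card_eq_fintype_card, Fintype.card_subtype] at hcard
    omega
  have hkerL : LinearMap.ker L = Submodule.span (ZMod 2) {a} := by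
    apply le_antisymm
    · intro x hx
      have hx' : Lf x = 0 := hx
      rcases hker2 x hx' with rfl | rfl
      · exact Submodule.zero_mem _
      · exact Submodule.mem_span_singleton_self _
    · intro x hx
      rw [Submodule.mem_span_singleton] at hx
      obtain ⟨t, rfl⟩ := hx
      rcases hz01 t with rfl | rfl
      · simp [LinearMap.mem_ker]
      · rw [one_smul]
        exact hka
  have hrk : Module.finrank (ZMod 2) (LinearMap.ker L) = 1 := by
    rw [hkerL]; exact finrank_span_singleton h0
  have h1 := LinearMap.finrank_range_add_finrank_ker L
  rw [Module.finrank_fin_fun, hrk] at h1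
  set W := LinearMap.range L with hW
  have h2 := W.finrank_quotient_add_finrank
  rw [Module.finrank_fin_fun] at h2
  have hq1 : Module.finrank (ZMod 2) ((Vec n) ⧸ W) = 1 := by omega
  let B := Module.finBasisOfFinrankEq (ZMod 2) ((Vec n) ⧸ W) hq1
  set φ : Vec n →ₗ[ZMod 2] ZMod 2 := (B.coord 0).comp W.mkQ with hφdef
  have hφ : ∀ x, (φ x = 0 ↔ x ∈ W) := by
    intro x
    constructor
    · intro h
      have h8 : W.mkQ x = 0 := by
        rw [← B.forall_coord_eq_zero_iff]
        intro i
        rw [Subsingleton.elim i 0]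
        simpa [hφdef] using h
      rwa [Submodule.mkQ_apply, Submodule.Quotient.mk_eq_zero] at h8
    · intro h
      have h9 : W.mkQ x = 0 := by
        rw [Submodule.mkQ_apply, Submodule.Quotient.mk_eq_zero]; exact h
      simp [hφdef, h9]
  have hφne : ∃ v, φ v ≠ 0 := by
    obtain ⟨v, hv⟩ := W.mkQ_surjective (B 0)
    refine ⟨v, fun h => B.ne_zero 0 ?_⟩
    have := (hφ v).mp h
    rw [← hv, Submodule.mkQ_apply, Submodule.Quotient.mk_eq_zero]
    exact this
  set b : Vec n := fun i => φ (Pi.single i 1) with hbdef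
  have hbx : ∀ x, dotp b x = φ x := by
    intro x
    rw [LinearMap.pi_apply_eq_sum_univ φ x]
    unfold dotp
    apply Finset.sum_congr rfl
    intro i _
    have hsingle : (fun j => if i = j then (1 : ZMod 2) else 0) = Pi.single i 1 := by
      funext j
      rw [Pi.single_apply]
      rcases eq_or_ne i j with rfl | hne
      · simp
      · simp [hne, Ne.symm hne]
    rw [hsingle, smul_eq_mul, mul_comm]
  have hbne : b ≠ 0 := by
    obtain ⟨v, hv⟩ := hφne
    intro hb
    apply hv
    rw [← hbx v, hb]
    simp [dotp]
  have hrange : Set.range (Dder F a) = {y | φ y = φ (F 0 + F a)} := by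
    ext y
    constructor
    · rintro ⟨x, rfl⟩
      rw [hDL x]
      show φ (Lf x + (F 0 + F a)) = φ (F 0 + F a)
      rw [map_add]
      have hmem : Lf x ∈ W := LinearMap.mem_range.mpr ⟨x, rfl⟩
      rw [(hφ (Lf x)).mpr hmem, zero_add]
    · intro hy
      have h10 : φ (y + (F 0 + F a)) = 0 := by
        rw [map_add, hy]
        exact CharTwo.add_self_eq_zero _
      obtain ⟨x, hx⟩ := LinearMap.mem_range.mp ((hφ _).mp h10)
      refine ⟨x, ?_⟩
      rw [hDL x]
      show Lf x + (F 0 + F a) = y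
      have hx' : Lf x = y + (F 0 + F a) := hx
      rw [hx', add_assoc, v2, add_zero]
  refine ⟨b, hbne, ?_⟩
  rcases hz01 (φ (F 0 + F a)) with hc | hc
  · left
    rw [hrange]
    ext y
    simp [Hyp, hbx, hc]
  · right
    rw [hrange]
    ext y
    simp [HypBar, hbx, hc]

theorem stmt_3 {n : ℕ} (F : Vec n → Vec n) (hq : IsQuadratic F) (ha : IsAPN F) :
    (∀ x : Vec n, x ≠ 0 → ∃! b : {b : Vec n // b ≠ 0}, x ∈ Vset F b.1) ∧
    (∀ b₁ b₂ : Vec n, b₁ ≠ 0 → b₂ ≠ 0 → b₁ ≠ b₂ →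
      Vset F b₁ ∩ Vset F b₂ = {0}) := by
  classical
  have huniq : ∀ (x b b' : Vec n),
      (Set.range (Dder F x) = Hyp b ∨ Set.range (Dder F x) = HypBar b) →
      (Set.range (Dder F x) = Hyp b' ∨ Set.range (Dder F x) = HypBar b') → b = b' := by
    intro x b b' h h'
    rcases h with h | h <;> rcases h' with h' | h'
    · exact hyp_inj (h.symm.trans h')
    · exact absurd (h.symm.trans h') (hyp_ne_bar b b')
    · exact absurd (h'.symm.trans h) (hyp_ne_bar b' b)
    · exact hypbar_inj (h.symm.trans h')
  have hmem : ∀ x b : Vec n, x ≠ 0 →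
      (x ∈ Vset F b ↔
        (Set.range (Dder F x) = Hyp b ∨ Set.range (Dder F x) = HypBar b)) := by
    intro x b hx
    unfold Vset Tset TsetBar
    simp [Set.mem_union, Set.mem_setOf_eq, hx]
  have h0mem : ∀ b : Vec n, (0 : Vec n) ∈ Vset F b := by
    intro b
    unfold Vset Tset
    left; right; rfl
  constructor
  · intro x hx
    obtain ⟨b, hbne, hb⟩ := key hq ha hx
    refine ⟨⟨b, hbne⟩, (hmem x b hx).mpr hb, ?_⟩
    rintro ⟨b', hb'ne⟩ hb'
    exact Subtype.ext (huniq x b' b ((hmem x b' hx).mp hb') hb)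
  · intro b₁ b₂ h1 h2 hne
    ext y
    simp only [Set.mem_inter_iff, Set.mem_singleton_iff]
    constructor
    · rintro ⟨hy1, hy2⟩
      by_contra hy0
      exact hne (huniq y b₁ b₂ ((hmem y b₁ hy0).mp hy1) ((hmem y b₂ hy0).mp hy2))
    · rintro rfl
      exact ⟨h0mem b₁, h0mem b₂⟩
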